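/- Let R be an algebra of type (𝒢, m, n), where s is the maximal cardinality of a gee. Then zcl(R) ≤ 2s + 2. -/

import Mathlib

open scoped TensorProduct

/-- `[k] = {1,…,k}` as a finset of positive integers. -/
def bra (k : ℕ) : Finset ℕ+ := (Finset.range k).image (fun i => ⟨i + 1, i.succ_pos⟩)

/-- The domination order on finite multisets of positive integers: `MLE S T` holds iff there
is a submultiset `T'` of `T` that can be matched up with `S` so that each element of `S` is
at most its partner in `T'`. -/
def MLE (S T : Multiset ℕ+) : Prop := ∃ T' ≤ T, Multiset.Rel (· ≤ ·) S T'

/-- `S` is a subgee of the collection `𝒢` of gees. -/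
def Subgee (𝒢 : Finset (Finset ℕ+)) (S : Finset ℕ+) : Prop := ∃ G ∈ 𝒢, MLE S.val G.val

/-- `rho i T` is the number of elements of `T` greater than `i`. -/
def rho (i : ℕ+) (T : Finset ℕ+) : ℕ := (T.filter (fun t => i < t)).card

/-- The ordered monomial `V_S = V_{s₁} ⋯ V_{s_k}` for `S = {s₁ < ⋯ < s_k}`. -/
def VSmon {R : Type} [Ring R] (V : ℕ+ → R) (S : Finset ℕ+) : R :=
  ((S.sort (· ≤ ·)).map V).prod

/-- An algebra of type `(𝒢, m, n)`. -/
structure IsPolygonAlgebra (n m : ℕ) (𝒢 : Finset (Finset ℕ+))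
    (R : Type) [Ring R] [Algebra ℚ R] [FiniteDimensional ℚ R]
    (𝒜 : ℕ → Submodule ℚ R) [GradedAlgebra 𝒜]
    (V : ℕ+ → R) (W : Finset ℕ+ → R) : Prop where
  hn : 4 ≤ n
  hm : 1 ≤ m
  gee_nonempty : 𝒢.Nonempty
  gee_sub : ∀ G ∈ 𝒢, G ⊆ bra (n - 1)
  gee_incomp : ∀ G ∈ 𝒢, ∀ G' ∈ 𝒢, MLE G.val G'.val → G = G'
  gee_card : ∀ G ∈ 𝒢, G.card ≤ m - 1
  gcomm : ∀ (i j : ℕ) (x y : R), x ∈ 𝒜 i → y ∈ 𝒜 j →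
    x * y = ((-1 : ℚ)) ^ (i * j) • (y * x)
  V_mem : ∀ i : ℕ+, (i : ℕ) ≤ n - 1 → V i ∈ 𝒜 1
  W_mem : ∀ S : Finset ℕ+, Subgee 𝒢 S → W S ∈ 𝒜 (m - S.card)
  VS_ne : ∀ S : Finset ℕ+, S ⊆ bra (n - 1) → (VSmon V S ≠ 0 ↔ Subgee 𝒢 S)
  basis_indep : LinearIndependent ℚ
    (Sum.elim (fun S : {S : Finset ℕ+ // Subgee 𝒢 S} => VSmon V S.1)
      (fun S : {S : Finset ℕ+ // Subgee 𝒢 S} => W S.1))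
  basis_span : Submodule.span ℚ (Set.range
    (Sum.elim (fun S : {S : Finset ℕ+ // Subgee 𝒢 S} => VSmon V S.1)
      (fun S : {S : Finset ℕ+ // Subgee 𝒢 S} => W S.1))) = ⊤
  VW : ∀ S S' : Finset ℕ+, Subgee 𝒢 S → Subgee 𝒢 S' → S.card = S'.card →
    VSmon V S * W S' = if S = S' then W ∅ else 0
  WW : ∀ S S' : Finset ℕ+, Subgee 𝒢 S → Subgee 𝒢 S' → S.card + S'.card = m →
    W S * W S' = 0

/-- `R` has no exotic products. -/
def NoExoticProducts (n : ℕ) (𝒢 : Finset (Finset ℕ+))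
    {R : Type} [Ring R] [Algebra ℚ R] (V : ℕ+ → R) (W : Finset ℕ+ → R) : Prop :=
  (∀ S S' : Finset ℕ+, Subgee 𝒢 S → Subgee 𝒢 S' → W S * W S' = 0) ∧
  (∀ i : ℕ+, (i : ℕ) ≤ n - 1 → ∀ S : Finset ℕ+, Subgee 𝒢 S →
    (i ∈ S → V i * W S = ((-1 : ℚ)) ^ (rho i (S.erase i)) • W (S.erase i)) ∧
    (i ∉ S → V i * W S = 0))

section Tensor

variable {R : Type} [Ring R] [Algebra ℚ R] (𝒜 : ℕ → Submodule ℚ R) [GradedAlgebra 𝒜]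

/-- The multiplication map `μ : R ⊗̂ R → R`. -/
noncomputable def muMap : (𝒜 ᵍ⊗[ℚ] 𝒜) →ₗ[ℚ] R :=
  (LinearMap.mul' ℚ R).comp (GradedTensorProduct.of ℚ 𝒜 𝒜).symm.toLinearMap

/-- `x ⊗ y` as an element of the graded tensor product `R ⊗̂ R`. -/
noncomputable def tm (x y : R) : 𝒜 ᵍ⊗[ℚ] 𝒜 := GradedTensorProduct.of ℚ 𝒜 𝒜 (x ⊗ₜ y)

/-- `ū = u ⊗ 1 - 1 ⊗ u`. -/
noncomputable def ubar (u : R) : 𝒜 ᵍ⊗[ℚ] 𝒜 := tm 𝒜 u 1 - tm 𝒜 1 u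

/-- `V̄_D = ∏_{i ∈ D} V̄ᵢ` with factors in increasing order of `i`. -/
noncomputable def Vbar (V : ℕ+ → R) (D : Finset ℕ+) : 𝒜 ᵍ⊗[ℚ] 𝒜 :=
  ((D.sort (· ≤ ·)).map (fun i => ubar 𝒜 (V i))).prod

/-- The set of `k` such that some product of `k` zero divisors in `R ⊗̂ R` is nonzero;
`zcl R` is the greatest element of this set. -/
def zclSet : Set ℕ :=
  {k : ℕ | ∃ L : List (𝒜 ᵍ⊗[ℚ] 𝒜), L.length = k ∧
    (∀ x ∈ L, muMap 𝒜 x = 0) ∧ L.prod ≠ 0}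

end Tensor


set_option linter.unusedSectionVars false

section ZP1
lemma mem_bra {i : ℕ+} {k : ℕ} : i ∈ bra k ↔ (i:ℕ) ≤ k := by
  rw [show bra k = (Finset.range k).image Nat.succPNat from rfl]
  simp only [Finset.mem_image, Finset.mem_range]
  constructor
  · rintro ⟨a, ha, rfl⟩; simpa using ha
  · intro hi
    have hp := i.pos
    refine ⟨(i:ℕ) - 1, by omega, ?_⟩
    apply Subtype.ext
    show (i:ℕ) - 1 + 1 = (i:ℕ)
    omega

lemma subgee_sub {𝒢 : Finset (Finset ℕ+)} {S : Finset ℕ+} {k : ℕ}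
    (hG : ∀ G ∈ 𝒢, G ⊆ bra k) (hS : Subgee 𝒢 S) : S ⊆ bra k := by
  obtain ⟨G, hGmem, T', hT', hrel⟩ := hS
  intro a ha
  obtain ⟨b, hb, hab⟩ := Multiset.exists_mem_of_rel_of_mem hrel ha
  have hbG : b ∈ G := Multiset.mem_of_le hT' hb
  have := mem_bra.mp (hG G hGmem hbG)
  exact mem_bra.mpr (le_trans (by exact_mod_cast hab) this)

lemma subgee_card {𝒢 : Finset (Finset ℕ+)} {S : Finset ℕ+}
    (hS : Subgee 𝒢 S) : S.card ≤ 𝒢.sup Finset.card := by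
  obtain ⟨G, hGmem, T', hT', hrel⟩ := hS
  have h1 : S.card = Multiset.card T' := Multiset.card_eq_card_of_rel hrel
  have h2 : Multiset.card T' ≤ G.card := Multiset.card_le_card hT'
  exact le_trans (h1 ▸ h2) (Finset.le_sup hGmem)

lemma subgee_empty {𝒢 : Finset (Finset ℕ+)} (hne : 𝒢.Nonempty) : Subgee 𝒢 ∅ := by
  obtain ⟨G, hG⟩ := hne
  exact ⟨G, hG, 0, bot_le, by simp [Multiset.rel_zero_left]⟩

end ZP1

section ZP2
variable {R : Type} [Ring R] [Algebra ℚ R] {𝒜 : ℕ → Submodule ℚ R} [GradedAlgebra 𝒜]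
  {V : ℕ+ → R} {n : ℕ} {𝒢 : Finset (Finset ℕ+)}

variable (hg : ∀ (i j : ℕ) (x y : R), x ∈ 𝒜 i → y ∈ 𝒜 j →
    x * y = ((-1 : ℚ)) ^ (i * j) • (y * x))
  (hV : ∀ i : ℕ+, (i : ℕ) ≤ n - 1 → V i ∈ 𝒜 1)

include hg hV in
lemma Vsq {i : ℕ+} (hi : (i:ℕ) ≤ n - 1) : V i * V i = 0 := by
  have h := hg 1 1 (V i) (V i) (hV i hi) (hV i hi)
  have h2 : V i * V i = -(V i * V i) := by simpa using h
  have h3 : (2:ℚ) • (V i * V i) = 0 := by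
    rw [two_smul]
    nth_rewrite 1 [h2]
    exact neg_add_cancel _
  calc V i * V i = ((1:ℚ)/2) • ((2:ℚ) • (V i * V i)) := by rw [smul_smul]; norm_num
  _ = 0 := by rw [h3, smul_zero]

include hg hV in
lemma perm_scalar {l₁ l₂ : List ℕ+} (hp : l₁.Perm l₂)
    (hl : ∀ i ∈ l₁, (i:ℕ) ≤ n - 1) :
    ∃ c : ℚ, (l₁.map V).prod = c • (l₂.map V).prod := by
  induction hp with
  | nil => exact ⟨1, by simp⟩
  | cons x _ ih =>
    obtain ⟨c, hc⟩ := ih (fun i hi => hl i (List.mem_cons_of_mem _ hi))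
    exact ⟨c, by simp only [List.map_cons, List.prod_cons, hc, mul_smul_comm]⟩
  | swap x y l =>
    refine ⟨-1, ?_⟩
    have hx : (x:ℕ) ≤ n - 1 := hl x (by simp)
    have hy : (y:ℕ) ≤ n - 1 := hl y (by simp)
    have hxy : V y * V x = (-1:ℚ) • (V x * V y) := by
      simpa using hg 1 1 (V y) (V x) (hV y hy) (hV x hx)
    simp only [List.map_cons, List.prod_cons, ← mul_assoc, hxy]
    rw [smul_mul_assoc]
  | trans h1 h2 ih1 ih2 =>
    obtain ⟨c, hc⟩ := ih1 hl
    obtain ⟨c', hc'⟩ := ih2 (fun i hi => hl i (h1.mem_iff.mpr hi))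
    exact ⟨c * c', by rw [hc, hc', smul_smul]⟩

variable (hVS : ∀ S : Finset ℕ+, S ⊆ bra (n - 1) → (VSmon V S ≠ 0 ↔ Subgee 𝒢 S))
  (hGcard : ∀ S : Finset ℕ+, Subgee 𝒢 S → S.card ≤ 𝒢.sup Finset.card)
  (hbra : ∀ i : ℕ+, (i:ℕ) ≤ n - 1 → i ∈ bra (n-1))

include hg hV hVS hGcard hbra in
lemma long_prod_zero {l : List ℕ+} (hl : ∀ i ∈ l, (i:ℕ) ≤ n - 1)
    (hlen : 𝒢.sup Finset.card + 1 ≤ l.length) : (l.map V).prod = 0 := by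
  by_cases hnd : l.Nodup
  · have hperm : l.Perm (l.toFinset.sort (· ≤ ·)) :=
      List.perm_of_nodup_nodup_toFinset_eq hnd (Finset.sort_nodup _ _)
        (Finset.sort_toFinset _ _).symm
    obtain ⟨c, hc⟩ := perm_scalar hg hV hperm hl
    have hmon : VSmon V l.toFinset = 0 := by
      by_contra hne
      have hsub : l.toFinset ⊆ bra (n-1) := by
        intro a ha
        exact hbra a (hl a (List.mem_toFinset.mp ha))
      have hsg := (hVS _ hsub).mp hne
      have := hGcard _ hsg
      rw [List.toFinset_card_of_nodup hnd] at this
      omega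
    rw [hc]
    rw [show ((l.toFinset.sort (· ≤ ·)).map V).prod = VSmon V l.toFinset from rfl, hmon,
      smul_zero]
  · obtain ⟨x, hdup⟩ := List.exists_duplicate_iff_not_nodup.mpr hnd
    have hsl : List.Sublist [x, x] l := List.duplicate_iff_sublist.mp hdup
    have hle : ([x, x] : Multiset ℕ+) ≤ (l : Multiset ℕ+) := Multiset.coe_le.mpr hsl.subperm
    obtain ⟨t, ht⟩ := Multiset.le_iff_exists_add.mp hle
    obtain ⟨t', rfl⟩ := Quotient.exists_rep t
    have hperm : l.Perm (x :: x :: t') := by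
      rw [← Multiset.coe_eq_coe]
      exact_mod_cast ht
    obtain ⟨c, hc⟩ := perm_scalar hg hV hperm hl
    have hx : (x:ℕ) ≤ n - 1 := hl x hdup.mem
    rw [hc]
    simp only [List.map_cons, List.prod_cons, ← mul_assoc, Vsq hg hV hx, zero_mul, smul_zero]

include hV in
lemma vlist_prod_mem {l : List ℕ+} (hl : ∀ i ∈ l, (i:ℕ) ≤ n - 1) :
    (l.map V).prod ∈ 𝒜 l.length := by
  induction l with
  | nil => simpa using SetLike.one_mem_graded 𝒜
  | cons a t ih =>
    have := SetLike.mul_mem_graded (hV a (hl a (by simp)))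
      (ih (fun i hi => hl i (List.mem_cons_of_mem _ hi)))
    simpa [Nat.add_comm] using this

end ZP2

/-- Labels for the basis elements: `inl S ↦ V_S`, `inr S ↦ W_S`. -/
abbrev Lbl := Finset ℕ+ ⊕ Finset ℕ+

def elL {R : Type} [Ring R] (V : ℕ+ → R) (W : Finset ℕ+ → R) : Lbl → R :=
  Sum.elim (VSmon V) W

def okLbl (𝒢 : Finset (Finset ℕ+)) : Lbl → Prop :=
  fun l => Subgee 𝒢 (Sum.elim id id l)

def degLbl (m : ℕ) : Lbl → ℕ := fun l => match l with
  | .inl S => S.card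
  | .inr S => m - S.card

def posB : Lbl → Bool := fun l => match l with
  | .inl S => decide S.Nonempty
  | .inr _ => true

def inrB : Lbl → Bool := fun l => match l with
  | .inl _ => false
  | .inr _ => true

section ZP3
variable {R : Type} [Ring R] [Algebra ℚ R] {𝒜 : ℕ → Submodule ℚ R} [GradedAlgebra 𝒜]
  {V : ℕ+ → R} {W : Finset ℕ+ → R} {n m : ℕ} {𝒢 : Finset (Finset ℕ+)}

/-- If everything in a spanning set has degree at most `m`, elements of `𝒜 d` for `d > m`
vanish. -/
lemma top_vanish (B : Set R) (hspan : Submodule.span ℚ B = ⊤)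
    (hdeg : ∀ b ∈ B, ∃ e, e ≤ m ∧ b ∈ 𝒜 e) {d : ℕ} (hd : m < d) {x : R} (hx : x ∈ 𝒜 d) :
    x = 0 := by
  have key : ∀ y : R, (DirectSum.decompose 𝒜 y) d = 0 := by
    intro y
    have hy : y ∈ Submodule.span ℚ B := by rw [hspan]; trivial
    refine Submodule.span_induction ?_ ?_ ?_ ?_ hy
    · intro b hb
      obtain ⟨e, he, hbe⟩ := hdeg b hb
      rw [DirectSum.decompose_of_mem 𝒜 hbe]
      exact DirectSum.of_eq_of_ne _ _ _ (by omega)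
    · simp
    · intro a b _ _ ha hb
      rw [DirectSum.decompose_add, DirectSum.add_apply, ha, hb, add_zero]
    · intro c a _ ha
      rw [DirectSum.decompose_smul, DirectSum.smul_apply, ha, smul_zero]
  have := DirectSum.decompose_of_mem_same 𝒜 hx
  rw [key x] at this
  simpa using this.symm

lemma count_deg (hGcard : ∀ S : Finset ℕ+, Subgee 𝒢 S → S.card ≤ 𝒢.sup Finset.card)
    (L : List Lbl) (hok : ∀ l ∈ L, okLbl 𝒢 l) :
    L.countP posB + (L.countP inrB) * (m - 𝒢.sup Finset.card) ≤
      (L.map (degLbl m)).sum + L.countP inrB := by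
  induction L with
  | nil => simp
  | cons a t ih =>
    have iht := ih (fun l hl => hok l (List.mem_cons_of_mem _ hl))
    rw [List.countP_cons, List.countP_cons, List.map_cons, List.sum_cons,
      Nat.add_mul]
    match a with
    | .inl S =>
      by_cases hS : S.Nonempty
      · have hc : 1 ≤ S.card := Finset.card_pos.mpr hS
        simp only [posB, inrB, degLbl, hS]
        norm_num
        omega
      · simp only [posB, inrB, degLbl, hS]
        norm_num
        omega
    | .inr S =>
      have hcard : S.card ≤ 𝒢.sup Finset.card := by
        have := hok (.inr S) (by simp)
        exact hGcard S this
      have hsub : m - 𝒢.sup Finset.card ≤ m - S.card := Nat.sub_le_sub_left hcard m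
      simp only [posB, inrB, degLbl]
      norm_num
      omega
end ZP3



section ZP4
variable {R : Type} [Ring R] [Algebra ℚ R] {𝒜 : ℕ → Submodule ℚ R} [GradedAlgebra 𝒜]
  {V : ℕ+ → R} {W : Finset ℕ+ → R} {n m : ℕ} {𝒢 : Finset (Finset ℕ+)}

variable (hg : ∀ (i j : ℕ) (x y : R), x ∈ 𝒜 i → y ∈ 𝒜 j →
    x * y = ((-1 : ℚ)) ^ (i * j) • (y * x))
  (hV : ∀ i : ℕ+, (i : ℕ) ≤ n - 1 → V i ∈ 𝒜 1)
  (hW : ∀ S : Finset ℕ+, Subgee 𝒢 S → W S ∈ 𝒜 (m - S.card))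
  (hGsub : ∀ G ∈ 𝒢, G ⊆ bra (n - 1))
  (hVS : ∀ S : Finset ℕ+, S ⊆ bra (n - 1) → (VSmon V S ≠ 0 ↔ Subgee 𝒢 S))
  (hGcard : ∀ S : Finset ℕ+, Subgee 𝒢 S → S.card ≤ 𝒢.sup Finset.card)
  (hspan : Submodule.span ℚ {x : R | ∃ l : Lbl, okLbl 𝒢 l ∧ x = elL V W l} = ⊤)
  (hsm : 𝒢.sup Finset.card + 1 ≤ m)

include hV in
lemma VSmon_mem {S : Finset ℕ+} (hS : S ⊆ bra (n-1)) : VSmon V S ∈ 𝒜 S.card := by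
  have h2 : ∀ i ∈ S.sort (· ≤ ·), (i:ℕ) ≤ n - 1 := by
    intro i hi
    exact mem_bra.mp (hS ((Finset.mem_sort (· ≤ ·)).mp hi))
  have := vlist_prod_mem (𝒜 := 𝒜) hV h2
  rwa [Finset.length_sort] at this

include hV hW hGsub in
lemma elL_mem {l : Lbl} (hl : okLbl 𝒢 l) : elL V W l ∈ 𝒜 (degLbl m l) := by
  match l with
  | .inl S =>
    have hsg : Subgee 𝒢 S := hl
    exact VSmon_mem hV (subgee_sub hGsub hsg)
  | .inr S => exact hW S hl

include hV hW hGsub in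
lemma lbl_prod_mem {L : List Lbl} (hok : ∀ l ∈ L, okLbl 𝒢 l) :
    ((L.map (elL V W)).prod) ∈ 𝒜 ((L.map (degLbl m)).sum) := by
  induction L with
  | nil => simpa using SetLike.one_mem_graded 𝒜
  | cons a t ih =>
    simp only [List.map_cons, List.prod_cons, List.sum_cons]
    exact SetLike.mul_mem_graded (elL_mem hV hW hGsub (hok a (by simp)))
      (ih (fun l hl => hok l (List.mem_cons_of_mem _ hl)))

def idxs : Lbl → List ℕ+ := fun l => match l with
  | .inl S => S.sort (· ≤ ·)
  | .inr _ => []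

lemma all_inl_prod (L : List Lbl) (hnr : ∀ l ∈ L, inrB l = false) :
    (L.map (elL V W)).prod = (((L.map idxs).flatten).map V).prod := by
  induction L with
  | nil => simp
  | cons a t ih =>
    simp only [List.map_cons, List.prod_cons, List.flatten_cons, List.map_append,
      List.prod_append]
    rw [ih (fun l hl => hnr l (List.mem_cons_of_mem _ hl))]
    congr 1
    match a with
    | .inl S => rfl
    | .inr S => exact absurd (hnr (.inr S) (by simp)) (by simp [inrB])

lemma count_le_join (L : List Lbl) (hnr : ∀ l ∈ L, inrB l = false) :
    L.countP posB ≤ (L.map (fun l => (idxs l).length)).sum := by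
  induction L with
  | nil => simp
  | cons a t ih =>
    simp only [List.countP_cons, List.map_cons, List.sum_cons]
    have iht := ih (fun l hl => hnr l (List.mem_cons_of_mem _ hl))
    match a with
    | .inl S =>
      by_cases hS : S.Nonempty
      · have : 1 ≤ (idxs (Sum.inl S)).length := by
          rw [idxs, Finset.length_sort]
          exact Finset.card_pos.mpr hS
        simp only [posB, hS]
        norm_num
        omega
      · simp only [posB, hS]
        norm_num
        omega
    | .inr S => exact absurd (hnr (.inr S) (by simp)) (by simp [inrB])

include hg hV hW hGsub hVS hGcard hspan hsm in
lemma leg_zero (L : List Lbl) (hok : ∀ l ∈ L, okLbl 𝒢 l)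
    (hcnt : 𝒢.sup Finset.card + 2 ≤ L.countP posB) :
    (L.map (elL V W)).prod = 0 := by
  have hbra : ∀ i : ℕ+, (i:ℕ) ≤ n - 1 → i ∈ bra (n-1) := fun i hi => mem_bra.mpr hi
  by_cases hq : L.countP inrB = 0
  · have hnr : ∀ l ∈ L, inrB l = false := by
      intro l hl
      have := List.countP_eq_zero.mp hq l hl
      simpa using this
    rw [all_inl_prod L hnr]
    apply long_prod_zero hg hV hVS hGcard hbra
    · intro i hi
      obtain ⟨piece, hpiece, hip⟩ := List.mem_flatten.mp hi
      obtain ⟨l, hlL, rfl⟩ := List.mem_map.mp hpiece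
      match l with
      | .inl S =>
        have hiS : i ∈ S := (Finset.mem_sort (· ≤ ·)).mp hip
        have hsg : Subgee 𝒢 S := hok _ hlL
        exact mem_bra.mp (subgee_sub hGsub hsg hiS)
      | .inr S => simp [idxs] at hip
    · have hcj := count_le_join (L := L) hnr
      have hlen : ((L.map idxs).flatten).length = (L.map (fun l => (idxs l).length)).sum := by
        rw [List.length_flatten, List.map_map]
        rfl
      omega
  · -- some W-type label: use degrees
    have hmem := lbl_prod_mem (m := m) hV hW hGsub hok
    have hcd := count_deg (m := m) hGcard L hok
    set s := 𝒢.sup Finset.card with hs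
    set p := L.countP posB with hp
    set q := L.countP inrB with hqd
    set sumd := (L.map (degLbl m)).sum with hsumd
    have hq1 : 1 ≤ q := Nat.one_le_iff_ne_zero.mpr hq
    have hd1 : 1 ≤ m - s := by omega
    have e3 : q * (m - s) = (q-1) * (m-s-1) + (q-1) + (m-s-1) + 1 := by
      obtain ⟨q', hq'⟩ : ∃ q', q = q' + 1 := ⟨q-1, by omega⟩
      obtain ⟨d', hd'⟩ : ∃ d', m - s = d' + 1 := ⟨m-s-1, by omega⟩
      rw [hq', hd']
      simp only [Nat.add_sub_cancel]
      ring
    have hmlt : m < sumd := by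
      have hnn : 0 ≤ (q-1) * (m-s-1) := Nat.zero_le _
      omega
    exact top_vanish {x : R | ∃ l : Lbl, okLbl 𝒢 l ∧ x = elL V W l} hspan
      (by
        rintro b ⟨l, hl, rfl⟩
        refine ⟨degLbl m l, ?_, elL_mem hV hW hGsub hl⟩
        match l with
        | .inl S =>
          have := hGcard S hl
          simp only [degLbl]
          omega
        | .inr S =>
          simp only [degLbl]
          omega)
      hmlt hmem

end ZP4


section ZP5
variable {R : Type} [Ring R] [Algebra ℚ R] (𝒜 : ℕ → Submodule ℚ R) [GradedAlgebra 𝒜]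

lemma tm_add_left (x x' y : R) : tm 𝒜 (x + x') y = tm 𝒜 x y + tm 𝒜 x' y := by
  rw [tm, tm, tm, TensorProduct.add_tmul, map_add]

lemma tm_add_right (x y y' : R) : tm 𝒜 x (y + y') = tm 𝒜 x y + tm 𝒜 x y' := by
  rw [tm, tm, tm, TensorProduct.tmul_add, map_add]

lemma tm_smul_left (c : ℚ) (x y : R) : tm 𝒜 (c • x) y = c • tm 𝒜 x y := by
  rw [tm, tm, ← TensorProduct.smul_tmul', map_smul]

lemma tm_smul_right (c : ℚ) (x y : R) : tm 𝒜 x (c • y) = c • tm 𝒜 x y := by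
  rw [tm, tm, TensorProduct.tmul_smul, map_smul]

lemma tm_zero_left (y : R) : tm 𝒜 0 y = 0 := by
  rw [tm, TensorProduct.zero_tmul, map_zero]

lemma tm_zero_right (x : R) : tm 𝒜 x 0 = 0 := by
  rw [tm, TensorProduct.tmul_zero, map_zero]

lemma tm_one_one : tm 𝒜 1 1 = 1 := by
  rw [tm, ← Algebra.TensorProduct.one_def]
  exact GradedTensorProduct.of_one 𝒜 𝒜

lemma ubar_zero : ubar 𝒜 (0 : R) = 0 := by
  rw [ubar, tm_zero_left, tm_zero_right, sub_zero]

lemma ubar_add (y y' : R) : ubar 𝒜 (y + y') = ubar 𝒜 y + ubar 𝒜 y' := by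
  rw [ubar, ubar, ubar, tm_add_left, tm_add_right]
  abel

lemma ubar_smul (c : ℚ) (y : R) : ubar 𝒜 (c • y) = c • ubar 𝒜 y := by
  rw [ubar, ubar, tm_smul_left, tm_smul_right, smul_sub]

lemma ubar_one : ubar 𝒜 (1 : R) = 0 := by
  rw [ubar, sub_self]

lemma mu_tm (x y : R) : muMap 𝒜 (tm 𝒜 x y) = x * y := by
  rw [muMap, tm, LinearMap.comp_apply]
  erw [GradedTensorProduct.of_symm_of]
  exact LinearMap.mul'_apply

/-- Koszul-sign multiplication rule, with the sign as an unspecified rational scalar. -/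
lemma tm_mul_of_mem {db dc : ℕ} (a b c d : R) (hb : b ∈ 𝒜 db) (hc : c ∈ 𝒜 dc) :
    ∃ ε : ℚ, tm 𝒜 a b * tm 𝒜 c d = ε • tm 𝒜 (a * c) (b * d) := by
  have key := GradedTensorProduct.tmul_coe_mul_coe_tmul 𝒜 𝒜 a (⟨b, hb⟩ : 𝒜 db)
    (⟨c, hc⟩ : 𝒜 dc) d
  rcases Int.units_eq_one_or ((-1 : ℤˣ) ^ (db * dc)) with hu | hu
  · refine ⟨1, ?_⟩
    rw [one_smul]
    calc tm 𝒜 a b * tm 𝒜 c d = (-1 : ℤˣ) ^ (db * dc) • tm 𝒜 (a * c) (b * d) := key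
    _ = tm 𝒜 (a * c) (b * d) := by rw [hu, one_smul]
  · refine ⟨-1, ?_⟩
    calc tm 𝒜 a b * tm 𝒜 c d = (-1 : ℤˣ) ^ (db * dc) • tm 𝒜 (a * c) (b * d) := key
    _ = (-1 : ℤ) • tm 𝒜 (a * c) (b * d) := by rw [hu, Units.smul_def]; norm_num
    _ = (-1 : ℚ) • tm 𝒜 (a * c) (b * d) := by
        rw [neg_one_zsmul, neg_smul, one_smul]

lemma tm_mul_one_tmul {db : ℕ} (a b c : R) (hb : b ∈ 𝒜 db) :
    tm 𝒜 a b * tm 𝒜 1 c = tm 𝒜 a (b * c) :=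
  GradedTensorProduct.tmul_coe_mul_one_tmul 𝒜 𝒜 a (⟨b, hb⟩ : 𝒜 db) c

lemma tm_one_mul_one (x y : R) : tm 𝒜 x 1 * tm 𝒜 1 y = tm 𝒜 x y :=
  GradedTensorProduct.tmul_one_mul_one_tmul 𝒜 𝒜 x y

lemma tm_one_mul_left (x y : R) : tm 𝒜 x 1 * tm 𝒜 y 1 = tm 𝒜 (x * y) 1 := by
  induction y using DirectSum.Decomposition.inductionOn 𝒜 with
  | zero => rw [tm_zero_left, mul_zero, mul_zero, tm_zero_left]
  | homogeneous y =>
    exact GradedTensorProduct.tmul_one_mul_coe_tmul 𝒜 𝒜 x y 1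
  | add y y' hy hy' =>
    rw [tm_add_left, mul_add, hy, hy', mul_add, tm_add_left]

lemma tm_decomp (x y : R) : tm 𝒜 x y = tm 𝒜 (x * y) 1 - tm 𝒜 x 1 * ubar 𝒜 y := by
  rw [ubar, mul_sub, tm_one_mul_left, tm_one_mul_one]
  abel

end ZP5

section ZP6
variable {R : Type} [Ring R] [Algebra ℚ R] (𝒜 : ℕ → Submodule ℚ R) [GradedAlgebra 𝒜]
  (𝒢 : Finset (Finset ℕ+)) (V : ℕ+ → R) (W : Finset ℕ+ → R)

/-- Generators for a module containing all zero divisors. -/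
def genZ : Set (𝒜 ᵍ⊗[ℚ] 𝒜) :=
  {z | ∃ la l : Lbl, okLbl 𝒢 la ∧ okLbl 𝒢 l ∧ posB l = true ∧
    z = tm 𝒜 (elL V W la) 1 * ubar 𝒜 (elL V W l)}

/-- Generators for modules containing products of `r` zero divisors. -/
def genM (r : ℕ) : Set (𝒜 ᵍ⊗[ℚ] 𝒜) :=
  {z | ∃ A B : List Lbl, (∀ l ∈ A, okLbl 𝒢 l) ∧ (∀ l ∈ B, okLbl 𝒢 l) ∧
    r ≤ A.countP posB + B.countP posB ∧
    z = tm 𝒜 ((A.map (elL V W)).prod) ((B.map (elL V W)).prod)}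

variable {𝒜 𝒢 V W}

lemma one_mem_M0 : (1 : 𝒜 ᵍ⊗[ℚ] 𝒜) ∈ Submodule.span ℚ (genM 𝒜 𝒢 V W 0) := by
  apply Submodule.subset_span
  exact ⟨[], [], by simp, by simp, by simp, by simp [tm_one_one]⟩

lemma zero_divisor_mem
    (hspan : Submodule.span ℚ {x : R | ∃ l : Lbl, okLbl 𝒢 l ∧ x = elL V W l} = ⊤)
    {z : 𝒜 ᵍ⊗[ℚ] 𝒜} (hz : muMap 𝒜 z = 0) :
    z ∈ Submodule.span ℚ (genZ 𝒜 𝒢 V W) := by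
  -- every `tm x 1 * ubar y` is in the span
  have hgen : ∀ y x : R, tm 𝒜 x 1 * ubar 𝒜 y ∈ Submodule.span ℚ (genZ 𝒜 𝒢 V W) := by
    intro y
    have hy : y ∈ Submodule.span ℚ {x : R | ∃ l : Lbl, okLbl 𝒢 l ∧ x = elL V W l} := by
      rw [hspan]; trivial
    refine Submodule.span_induction ?_ ?_ ?_ ?_ hy
    · rintro b ⟨l, hl, rfl⟩ x
      by_cases hpos : posB l = true
      · -- expand x over the basis
        have hx : x ∈ Submodule.span ℚ {x : R | ∃ l : Lbl, okLbl 𝒢 l ∧ x = elL V W l} := by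
          rw [hspan]; trivial
        refine Submodule.span_induction ?_ ?_ ?_ ?_ hx
        · rintro a ⟨la, hla, rfl⟩
          exact Submodule.subset_span ⟨la, l, hla, hl, hpos, rfl⟩
        · rw [tm_zero_left, zero_mul]; exact Submodule.zero_mem _
        · intro a a' _ _ ha ha'
          rw [tm_add_left, add_mul]
          exact Submodule.add_mem _ ha ha'
        · intro c a _ ha
          rw [tm_smul_left, smul_mul_assoc]
          exact Submodule.smul_mem _ c ha
      · -- `l` is `inl ∅`, so `elL V W l = 1` and the bar vanishes
        have h1 : elL V W l = 1 := by
          match l with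
          | .inl S =>
            have hS : ¬S.Nonempty := by simpa [posB] using hpos
            rw [Finset.not_nonempty_iff_eq_empty] at hS
            subst hS
            simp [elL, VSmon]
          | .inr S => simp [posB] at hpos
        rw [h1, ubar_one, mul_zero]
        exact Submodule.zero_mem _
    · intro x
      rw [ubar_zero, mul_zero]
      exact Submodule.zero_mem _
    · intro a b _ _ ha hb x
      rw [ubar_add, mul_add]
      exact Submodule.add_mem _ (ha x) (hb x)
    · intro c a _ ha x
      rw [ubar_smul, mul_smul_comm]
      exact Submodule.smul_mem _ c (ha x)
  -- main decomposition
  have main : ∀ t : R ⊗[ℚ] R,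
      (GradedTensorProduct.of ℚ 𝒜 𝒜 t) -
        tm 𝒜 (muMap 𝒜 (GradedTensorProduct.of ℚ 𝒜 𝒜 t)) 1 ∈
        Submodule.span ℚ (genZ 𝒜 𝒢 V W) := by
    intro t
    induction t with
    | zero =>
      rw [map_zero, map_zero, tm_zero_left, sub_zero]
      exact Submodule.zero_mem _
    | tmul x y =>
      have h1 : GradedTensorProduct.of ℚ 𝒜 𝒜 (x ⊗ₜ[ℚ] y) = tm 𝒜 x y := rfl
      rw [h1, mu_tm, tm_decomp 𝒜 x y]
      have : tm 𝒜 (x * y) 1 - tm 𝒜 x 1 * ubar 𝒜 y - tm 𝒜 (x * y) 1 =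
          -(tm 𝒜 x 1 * ubar 𝒜 y) := by abel
      rw [this]
      exact Submodule.neg_mem _ (hgen y x)
    | add t u ht hu =>
      rw [map_add, map_add, tm_add_left]
      have : GradedTensorProduct.of ℚ 𝒜 𝒜 t + GradedTensorProduct.of ℚ 𝒜 𝒜 u -
          (tm 𝒜 (muMap 𝒜 (GradedTensorProduct.of ℚ 𝒜 𝒜 t)) 1 +
           tm 𝒜 (muMap 𝒜 (GradedTensorProduct.of ℚ 𝒜 𝒜 u)) 1) =
          (GradedTensorProduct.of ℚ 𝒜 𝒜 t -
            tm 𝒜 (muMap 𝒜 (GradedTensorProduct.of ℚ 𝒜 𝒜 t)) 1) +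
          (GradedTensorProduct.of ℚ 𝒜 𝒜 u -
            tm 𝒜 (muMap 𝒜 (GradedTensorProduct.of ℚ 𝒜 𝒜 u)) 1) := by abel
      rw [this]
      exact Submodule.add_mem _ ht hu
  have hz' := main ((GradedTensorProduct.of ℚ 𝒜 𝒜).symm z)
  rw [GradedTensorProduct.symm_of_of] at hz'
  rw [hz, tm_zero_left, sub_zero] at hz'
  exact hz'

end ZP6


section ZP7
variable {R : Type} [Ring R] [Algebra ℚ R] {𝒜 : ℕ → Submodule ℚ R} [GradedAlgebra 𝒜]
  {V : ℕ+ → R} {W : Finset ℕ+ → R} {n m : ℕ} {𝒢 : Finset (Finset ℕ+)}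

variable (hg : ∀ (i j : ℕ) (x y : R), x ∈ 𝒜 i → y ∈ 𝒜 j →
    x * y = ((-1 : ℚ)) ^ (i * j) • (y * x))
  (hV : ∀ i : ℕ+, (i : ℕ) ≤ n - 1 → V i ∈ 𝒜 1)
  (hW : ∀ S : Finset ℕ+, Subgee 𝒢 S → W S ∈ 𝒜 (m - S.card))
  (hGsub : ∀ G ∈ 𝒢, G ⊆ bra (n - 1))
  (hVS : ∀ S : Finset ℕ+, S ⊆ bra (n - 1) → (VSmon V S ≠ 0 ↔ Subgee 𝒢 S))
  (hGcard : ∀ S : Finset ℕ+, Subgee 𝒢 S → S.card ≤ 𝒢.sup Finset.card)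
  (hspan : Submodule.span ℚ {x : R | ∃ l : Lbl, okLbl 𝒢 l ∧ x = elL V W l} = ⊤)
  (hsm : 𝒢.sup Finset.card + 1 ≤ m)

include hV hW hGsub in
lemma M_step {r : ℕ} {z w : 𝒜 ᵍ⊗[ℚ] 𝒜} (hz : z ∈ Submodule.span ℚ (genM 𝒜 𝒢 V W r))
    (hw : w ∈ Submodule.span ℚ (genZ 𝒜 𝒢 V W)) :
    z * w ∈ Submodule.span ℚ (genM 𝒜 𝒢 V W (r + 1)) := by
  have main : ∀ w ∈ Submodule.span ℚ (genZ 𝒜 𝒢 V W),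
      ∀ z ∈ Submodule.span ℚ (genM 𝒜 𝒢 V W r),
      z * w ∈ Submodule.span ℚ (genM 𝒜 𝒢 V W (r + 1)) := by
    intro w hw
    refine Submodule.span_induction ?_ ?_ ?_ ?_ hw
    · rintro w' ⟨la, l, hla, hl, hpos, rfl⟩ z hz
      refine Submodule.span_induction ?_ ?_ ?_ ?_ hz
      · rintro z' ⟨A, B, hA, hB, hcnt, rfl⟩
        set U := ((A.map (elL V W)).prod) with hU'
        set Vb := ((B.map (elL V W)).prod) with hVb'
        have hU : U ∈ 𝒜 ((A.map (degLbl m)).sum) := lbl_prod_mem hV hW hGsub hA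
        have hVb : Vb ∈ 𝒜 ((B.map (degLbl m)).sum) := lbl_prod_mem hV hW hGsub hB
        have ha : elL V W la ∈ 𝒜 (degLbl m la) := elL_mem hV hW hGsub hla
        have hb : elL V W l ∈ 𝒜 (degLbl m l) := elL_mem hV hW hGsub hl
        obtain ⟨ε₁, he1⟩ := tm_mul_of_mem 𝒜 U Vb (elL V W la) (1 : R) hVb ha
        obtain ⟨ε₂, he2⟩ :=
          tm_mul_of_mem 𝒜 (U * elL V W la) Vb (elL V W l) (1 : R) hVb hb
        have he3 := tm_mul_one_tmul 𝒜 (U * elL V W la) Vb (elL V W l) hVb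
        have expand : tm 𝒜 U Vb * (tm 𝒜 (elL V W la) 1 * ubar 𝒜 (elL V W l)) =
            ε₁ • (ε₂ • tm 𝒜 ((U * elL V W la) * elL V W l) Vb
              - tm 𝒜 (U * elL V W la) (Vb * elL V W l)) := by
          rw [← mul_assoc, he1, mul_one, ubar, smul_mul_assoc, mul_sub, he2, mul_one, he3]
        rw [expand]
        have hg1 : tm 𝒜 ((U * elL V W la) * elL V W l) Vb ∈
            Submodule.span ℚ (genM 𝒜 𝒢 V W (r + 1)) := by
          apply Submodule.subset_span
          refine ⟨A ++ [la, l], B, ?_, hB, ?_, ?_⟩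
          · intro x hx
            rcases List.mem_append.mp hx with hx | hx
            · exact hA x hx
            · rcases List.mem_cons.mp hx with rfl | hx
              · exact hla
              · rw [List.mem_singleton] at hx
                subst hx
                exact hl
          · rw [List.countP_append]
            have : List.countP posB [la, l] ≥ 1 := by
              simp [List.countP_cons, hpos]
            omega
          · congr 1
            rw [List.map_append, List.prod_append]
            simp [mul_assoc, hU']
        have hg2 : tm 𝒜 (U * elL V W la) (Vb * elL V W l) ∈
            Submodule.span ℚ (genM 𝒜 𝒢 V W (r + 1)) := by
          apply Submodule.subset_span
          refine ⟨A ++ [la], B ++ [l], ?_, ?_, ?_, ?_⟩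
          · intro x hx
            rcases List.mem_append.mp hx with hx | hx
            · exact hA x hx
            · rw [List.mem_singleton] at hx
              subst hx
              exact hla
          · intro x hx
            rcases List.mem_append.mp hx with hx | hx
            · exact hB x hx
            · rw [List.mem_singleton] at hx
              subst hx
              exact hl
          · rw [List.countP_append, List.countP_append]
            have : List.countP posB [l] = 1 := by simp [List.countP_cons, hpos]
            omega
          · congr 1
            · rw [List.map_append, List.prod_append]; simp [hU']
            · rw [List.map_append, List.prod_append]; simp [hVb']
        exact Submodule.smul_mem _ _
          (Submodule.sub_mem _ (Submodule.smul_mem _ _ hg1) hg2)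
      · rw [zero_mul]; exact Submodule.zero_mem _
      · intro a b _ _ hma hmb
        rw [add_mul]; exact Submodule.add_mem _ hma hmb
      · intro c a _ hma
        rw [smul_mul_assoc]; exact Submodule.smul_mem _ _ hma
    · intro z _
      rw [mul_zero]; exact Submodule.zero_mem _
    · intro a b _ _ hma hmb z hzz
      rw [mul_add]; exact Submodule.add_mem _ (hma z hzz) (hmb z hzz)
    · intro c a _ hma z hzz
      rw [mul_smul_comm]; exact Submodule.smul_mem _ _ (hma z hzz)
  exact main w hw z hz

include hV hW hGsub in
lemma list_in_M (L : List (𝒜 ᵍ⊗[ℚ] 𝒜)) (hL : ∀ x ∈ L, x ∈ Submodule.span ℚ (genZ 𝒜 𝒢 V W)) :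
    ∀ (r : ℕ) (z : 𝒜 ᵍ⊗[ℚ] 𝒜), z ∈ Submodule.span ℚ (genM 𝒜 𝒢 V W r) →
      z * L.prod ∈ Submodule.span ℚ (genM 𝒜 𝒢 V W (r + L.length)) := by
  induction L with
  | nil => intro r z hz; simpa using hz
  | cons w t ih =>
    intro r z hz
    rw [List.prod_cons, ← mul_assoc]
    have h1 : z * w ∈ Submodule.span ℚ (genM 𝒜 𝒢 V W (r + 1)) :=
      M_step hV hW hGsub hz (hL w (by simp))
    have h2 := ih (fun x hx => hL x (List.mem_cons_of_mem _ hx)) (r + 1) _ h1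
    have : r + (w :: t).length = (r + 1) + t.length := by
      rw [List.length_cons]; omega
    rw [this]
    exact h2

include hg hV hW hGsub hVS hGcard hspan hsm in
lemma M_vanish {K : ℕ} (hK : 2 * 𝒢.sup Finset.card + 3 ≤ K)
    {z : 𝒜 ᵍ⊗[ℚ] 𝒜} (hz : z ∈ Submodule.span ℚ (genM 𝒜 𝒢 V W K)) : z = 0 := by
  have hle : Submodule.span ℚ (genM 𝒜 𝒢 V W K) ≤ ⊥ := by
    rw [Submodule.span_le]
    rintro z' ⟨A, B, hA, hB, hcnt, rfl⟩
    simp only [SetLike.mem_coe, Submodule.mem_bot]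
    rcases (by omega : 𝒢.sup Finset.card + 2 ≤ A.countP posB ∨
        𝒢.sup Finset.card + 2 ≤ B.countP posB) with hc | hc
    · rw [leg_zero hg hV hW hGsub hVS hGcard hspan hsm A hA hc, tm_zero_left]
    · rw [leg_zero hg hV hW hGsub hVS hGcard hspan hsm B hB hc, tm_zero_right]
  simpa using hle hz

end ZP7

/-- Upper bound for the zero-divisor-cup-length of an algebra of type `(𝒢, m, n)`:
every nonzero product of zero divisors in `R ⊗̂ R` has at most `2s + 2` factors, i.e.
`zcl(R) ≤ 2s + 2`, where `s` is the maximal cardinality of a gee. -/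
theorem stmt_7 (n m : ℕ) (𝒢 : Finset (Finset ℕ+))
    (R : Type) [Ring R] [Algebra ℚ R] [FiniteDimensional ℚ R]
    (𝒜 : ℕ → Submodule ℚ R) [GradedAlgebra 𝒜] (V : ℕ+ → R) (W : Finset ℕ+ → R)
    (h : IsPolygonAlgebra n m 𝒢 R 𝒜 V W) :
    ∀ j ∈ zclSet 𝒜, j ≤ 2 * 𝒢.sup Finset.card + 2 := by
  intro j hj
  by_contra hgt
  push_neg at hgt
  obtain ⟨L, hlen, hzd, hne⟩ := hj
  set s := 𝒢.sup Finset.card with hs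
  have hsm : s + 1 ≤ m := by
    have h1 : s ≤ m - 1 := Finset.sup_le h.gee_card
    have h2 := h.hm
    omega
  have hGcard : ∀ S : Finset ℕ+, Subgee 𝒢 S → S.card ≤ s := fun S hS => subgee_card hS
  have hspan : Submodule.span ℚ {x : R | ∃ l : Lbl, okLbl 𝒢 l ∧ x = elL V W l} = ⊤ := by
    apply le_antisymm le_top
    rw [← h.basis_span]
    apply Submodule.span_mono
    rintro x ⟨i, rfl⟩
    match i with
    | .inl ⟨S, hS⟩ => exact ⟨.inl S, hS, rfl⟩
    | .inr ⟨S, hS⟩ => exact ⟨.inr S, hS, rfl⟩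
  set K := 2 * s + 3 with hK
  have hKj : K ≤ j := by omega
  have htake : (L.take K).length = K := by rw [List.length_take]; omega
  have hmem : ∀ x ∈ L.take K, x ∈ Submodule.span ℚ (genZ 𝒜 𝒢 V W) := by
    intro x hx
    exact zero_divisor_mem hspan (hzd x (List.mem_of_mem_take hx))
  have hprod := list_in_M (n := n) h.V_mem h.W_mem h.gee_sub (L.take K) hmem 0 1 one_mem_M0
  rw [one_mul, zero_add, htake] at hprod
  have hzero : (L.take K).prod = 0 :=
    M_vanish (n := n) h.gcomm h.V_mem h.W_mem h.gee_sub h.VS_ne hGcard hspan hsm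
      (by omega) hprod
  apply hne
  rw [← List.take_append_drop K L, List.prod_append, hzero, zero_mul]
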